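/- (Wall claim in Remark 3.3) Let n ≥ 2 and c ≥ 1, and let θ̄ = (θ̄₀, θ̄₁) ∈ ℝ² lie on one of the open rays R₁ = {(θ₀,θ₁) : θ₀ > 0, θ₀ + θ₁ = 0} or R₂ = {(θ₀,θ₁) : θ₀ > 0, (c−1)θ₀ + cθ₁ = 0}. Then there exists a (c,c)-dimensional framed representation of Λ_n which is θ̄-semistable but not θ_c-semistable, where θ_c = (2c, 1−2c). -/
import Mathlib


open Module

noncomputable def auxN (c : ℕ) : (Fin c → ℂ) →ₗ[ℂ] (Fin c → ℂ) :=
  LinearMap.pi fun i => if h : i.1 + 1 < c then LinearMap.proj ⟨i.1 + 1, h⟩ else 0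

noncomputable def auxP (c : ℕ) : (Fin c → ℂ) →ₗ[ℂ] (Fin c → ℂ) :=
  LinearMap.pi fun i => if i.1 = 0 then 0 else LinearMap.proj i

lemma auxN_apply (c : ℕ) (x : Fin c → ℂ) (i : Fin c) (h : i.1 + 1 < c) :
    auxN c x i = x ⟨i.1 + 1, h⟩ := by
  simp [auxN, dif_pos h]

lemma auxP_eq_self (c : ℕ) (hc : 0 < c) (x : Fin c → ℂ) (hx : x ⟨0, hc⟩ = 0) :
    auxP c x = x := by
  funext i
  simp only [auxP, LinearMap.pi_apply]
  by_cases h : i.1 = 0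
  · have : i = ⟨0, hc⟩ := Fin.ext h
    simp [h, this, hx]
  · simp [h]

lemma aux_inv (c : ℕ) (hc : 0 < c) (S : Submodule ℂ (Fin c → ℂ))
    (hker : ∀ x ∈ S, x ⟨0, hc⟩ = 0) (hinv : S.map (auxN c) ≤ S) : S = ⊥ := by
  have key : ∀ j : ℕ, ∀ x ∈ S, ∀ h : j < c, x ⟨j, h⟩ = 0 := by
    intro j
    induction j with
    | zero => intro x hx h; exact hker x hx
    | succ j ih =>
      intro x hx h
      have hNx : auxN c x ∈ S := hinv ⟨x, hx, rfl⟩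
      have := ih _ hNx (by omega)
      rwa [auxN_apply c x ⟨j, by omega⟩ h] at this
  rw [eq_bot_iff]
  intro x hx
  rw [Submodule.mem_bot]
  funext i
  exact key i.1 x hx i.2

lemma aux_lt (c : ℕ) (hc : 0 < c) (S : Submodule ℂ (Fin c → ℂ))
    (hker : ∀ x ∈ S, x ⟨0, hc⟩ = 0) (hS : S ≠ ⊥) :
    finrank ℂ S < finrank ℂ ↥(S ⊔ S.map (auxN c)) := by
  have hle : S ≤ S ⊔ S.map (auxN c) := le_sup_left
  have hlt : S < S ⊔ S.map (auxN c) := by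
    rcases lt_or_eq_of_le hle with h | h
    · exact h
    · exfalso
      apply hS
      apply aux_inv c hc S hker
      exact le_trans le_sup_right h.ge
  exact Submodule.finrank_lt_finrank_of_lt hlt

noncomputable def auxE (c : ℕ) (hc : 0 < c) : (Fin c → ℂ) →ₗ[ℂ] ℂ :=
  LinearMap.proj ⟨0, hc⟩

lemma auxE_ker (c : ℕ) (hc : 0 < c) (x : Fin c → ℂ) :
    x ∈ LinearMap.ker (auxE c hc) ↔ x ⟨0, hc⟩ = 0 := by
  simp [auxE, LinearMap.mem_ker]

lemma finrank_ker_auxE (c : ℕ) (hc : 0 < c) :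
    finrank ℂ (LinearMap.ker (auxE c hc)) = c - 1 := by
  have hsurj : Function.Surjective (auxE c hc) := fun y => ⟨fun _ => y, rfl⟩
  have h1 := LinearMap.finrank_range_add_finrank_ker (auxE c hc)
  rw [LinearMap.range_eq_top.mpr hsurj, finrank_top] at h1
  rw [Module.finrank_fin_fun, Module.finrank_self] at h1
  omega

lemma aux_main (c : ℕ) (hc : 0 < c) (S₀ S₁ : Submodule ℂ (Fin c → ℂ))
    (hA1 : S₀.map (auxP c) ≤ S₁) (hA2 : S₀.map (auxN c) ≤ S₁)
    (hne : S₀ ⊓ LinearMap.ker (auxE c hc) ≠ ⊥) :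
    finrank ℂ ↥(S₀ ⊓ LinearMap.ker (auxE c hc)) < finrank ℂ S₁ := by
  set S' := S₀ ⊓ LinearMap.ker (auxE c hc) with hS'
  have hker : ∀ x ∈ S', x ⟨0, hc⟩ = 0 := fun x hx => (auxE_ker c hc x).mp hx.2
  have h1 : S' ≤ S₁ := fun x hx => hA1 ⟨x, hx.1, auxP_eq_self c hc x (hker x hx)⟩
  have h2 : S'.map (auxN c) ≤ S₁ := le_trans (Submodule.map_mono inf_le_left) hA2
  calc finrank ℂ S' < finrank ℂ ↥(S' ⊔ S'.map (auxN c)) := aux_lt c hc S' hker hne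
    _ ≤ finrank ℂ S₁ := Submodule.finrank_mono (sup_le h1 h2)

lemma aux_inf (c : ℕ) (hc : 0 < c) (S₀ : Submodule ℂ (Fin c → ℂ)) :
    finrank ℂ S₀ ≤ finrank ℂ ↥(S₀ ⊓ LinearMap.ker (auxE c hc)) + 1 := by
  have h := Submodule.finrank_sup_add_finrank_inf_eq S₀ (LinearMap.ker (auxE c hc))
  have h2 : finrank ℂ ↥(S₀ ⊔ LinearMap.ker (auxE c hc)) ≤ c := by
    have := Submodule.finrank_le (R := ℂ) (S₀ ⊔ LinearMap.ker (auxE c hc))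
    rwa [Module.finrank_fin_fun] at this
  have h3 := finrank_ker_auxE c hc
  omega

lemma aux_le_c (c : ℕ) (S₀ : Submodule ℂ (Fin c → ℂ)) : finrank ℂ S₀ ≤ c := by
  have := Submodule.finrank_le (R := ℂ) S₀
  rwa [Module.finrank_fin_fun] at this

lemma auxP_single (c : ℕ) (hc : 0 < c) : auxP c (Pi.single ⟨0, hc⟩ 1) = 0 := by
  funext i
  simp only [auxP, LinearMap.pi_apply, Pi.zero_apply]
  by_cases h : i.1 = 0
  · simp [h]
  · simp only [h, if_false, LinearMap.proj_apply]
    exact Pi.single_eq_of_ne (Fin.ne_of_val_ne h) 1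

lemma auxN_single (c : ℕ) (hc : 0 < c) : auxN c (Pi.single ⟨0, hc⟩ 1) = 0 := by
  funext i
  simp only [auxN, LinearMap.pi_apply, Pi.zero_apply]
  by_cases h : i.1 + 1 < c
  · simp only [dif_pos h, LinearMap.proj_apply]
    exact Pi.single_eq_of_ne (Fin.ne_of_val_ne (Nat.succ_ne_zero i.1)) 1
  · simp [dif_neg h]

set_option maxHeartbeats 1000000 in
/-- (Wall claim in Remark 3.3) For θ̄ on one of the open rays R₁, R₂ bounding the
chamber Γ_c, there exists a (c,c)-dimensional framed representation of Λ_n which is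
θ̄-semistable but not θ_c-semistable, where θ_c = (2c, 1−2c). Here we take
V₀ = V₁ = ℂ^c and W = ℂ. -/
theorem stmt_15 (n c : ℕ) (hn : 2 ≤ n) (hc : 1 ≤ c)
    (θ₀ θ₁ : ℝ)
    (hwall : (0 < θ₀ ∧ θ₀ + θ₁ = 0) ∨ (0 < θ₀ ∧ ((c : ℝ) - 1) * θ₀ + (c : ℝ) * θ₁ = 0)) :
    ∃ (A₁ A₂ : (Fin c → ℂ) →ₗ[ℂ] (Fin c → ℂ))
      (C : Fin n → ((Fin c → ℂ) →ₗ[ℂ] (Fin c → ℂ)))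
      (e : (Fin c → ℂ) →ₗ[ℂ] ℂ) (f : Fin (n - 1) → (ℂ →ₗ[ℂ] (Fin c → ℂ))),
      -- the relations (Q1)
      (∀ q : Fin (n - 1),
        A₂ ∘ₗ C ⟨q.1 + 1, by have := q.2; omega⟩ = A₁ ∘ₗ C ⟨q.1, by have := q.2; omega⟩) ∧
      (∀ q : Fin (n - 1),
        C ⟨q.1 + 1, by have := q.2; omega⟩ ∘ₗ A₂ =
          C ⟨q.1, by have := q.2; omega⟩ ∘ₗ A₁ + f q ∘ₗ e) ∧
      -- θ̄-semistable
      (∀ (S₀ S₁ : Submodule ℂ (Fin c → ℂ)),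
        S₀.map A₁ ≤ S₁ → S₀.map A₂ ≤ S₁ →
        (∀ q : Fin n, S₁.map (C q) ≤ S₀) →
        ((S₀ ≤ LinearMap.ker e →
            θ₀ * (finrank ℂ S₀ : ℝ) + θ₁ * (finrank ℂ S₁ : ℝ) ≤ 0) ∧
         ((∀ q, LinearMap.range (f q) ≤ S₀) →
            θ₀ * (finrank ℂ S₀ : ℝ) + θ₁ * (finrank ℂ S₁ : ℝ) ≤ (θ₀ + θ₁) * c))) ∧
      -- but not θ_c-semistable
      ¬(∀ (S₀ S₁ : Submodule ℂ (Fin c → ℂ)),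
        S₀.map A₁ ≤ S₁ → S₀.map A₂ ≤ S₁ →
        (∀ q : Fin n, S₁.map (C q) ≤ S₀) →
        ((S₀ ≤ LinearMap.ker e →
            (2 * c : ℝ) * (finrank ℂ S₀ : ℝ) + (1 - 2 * c) * (finrank ℂ S₁ : ℝ) ≤ 0) ∧
         ((∀ q, LinearMap.range (f q) ≤ S₀) →
            (2 * c : ℝ) * (finrank ℂ S₀ : ℝ) + (1 - 2 * c) * (finrank ℂ S₁ : ℝ) ≤
              ((2 * c : ℝ) + (1 - 2 * c)) * c))) := by
  have hc0 : 0 < c := hc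
  have hc1 : (1 : ℝ) ≤ (c : ℝ) := by exact_mod_cast hc
  have hcR : (0 : ℝ) < (c : ℝ) := by linarith
  rcases hwall with ⟨hθ₀, hθ⟩ | ⟨hθ₀, hθ⟩
  · -- Ray R₁ : θ₀ + θ₁ = 0. Take A₁ = A₂ = id, everything else 0.
    refine ⟨LinearMap.id, LinearMap.id, fun _ => 0, 0, fun _ => 0, ?_, ?_, ?_, ?_⟩
    · intro q; rfl
    · intro q; ext x; simp
    · intro S₀ S₁ h1 _ _
      rw [Submodule.map_id] at h1
      have hle : (finrank ℂ S₀ : ℝ) ≤ (finrank ℂ S₁ : ℝ) := by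
        exact_mod_cast Submodule.finrank_mono h1
      have hθ1 : θ₁ = -θ₀ := by linarith
      constructor
      · intro _
        rw [hθ1]; nlinarith [mul_nonneg hθ₀.le (sub_nonneg.mpr hle)]
      · intro _
        rw [hθ1]; nlinarith [mul_nonneg hθ₀.le (sub_nonneg.mpr hle)]
    · intro hss
      have h1 : (⊤ : Submodule ℂ (Fin c → ℂ)).map LinearMap.id ≤ ⊤ := le_top
      have h3 : ∀ q : Fin n, (⊤ : Submodule ℂ (Fin c → ℂ)).map
          ((fun _ => (0 : (Fin c → ℂ) →ₗ[ℂ] (Fin c → ℂ))) q) ≤ ⊤ := fun _ => le_top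
      have hker : (⊤ : Submodule ℂ (Fin c → ℂ)) ≤
          LinearMap.ker (0 : (Fin c → ℂ) →ₗ[ℂ] ℂ) := by
        rw [LinearMap.ker_zero]
      have := (hss ⊤ ⊤ h1 h1 h3).1 hker
      rw [finrank_top, Module.finrank_fin_fun] at this
      nlinarith
  · -- Ray R₂ : (c-1)θ₀ + cθ₁ = 0. Take A₁ = auxP, A₂ = auxN, e = auxE, C = 0, f = 0.
    refine ⟨auxP c, auxN c, fun _ => 0, auxE c hc0, fun _ => 0, ?_, ?_, ?_, ?_⟩
    · intro q; ext x; simp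
    · intro q; ext x; simp
    · intro S₀ S₁ hA1 hA2 _
      set a : ℝ := (finrank ℂ S₀ : ℝ) with ha
      set b : ℝ := (finrank ℂ S₁ : ℝ) with hb
      have hbnn : (0 : ℝ) ≤ b := Nat.cast_nonneg _
      have hann : (0 : ℝ) ≤ a := Nat.cast_nonneg _
      have hac : a ≤ (c : ℝ) := by rw [ha]; exact_mod_cast aux_le_c c S₀
      have hθb : (((c : ℝ) - 1) * θ₀ + (c : ℝ) * θ₁) * b = 0 := by rw [hθ]; ring
      have hθc : (((c : ℝ) - 1) * θ₀ + (c : ℝ) * θ₁) * (c : ℝ) = 0 := by rw [hθ]; ring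
      constructor
      · intro hker
        have hSeq : S₀ ⊓ LinearMap.ker (auxE c hc0) = S₀ := inf_eq_left.mpr hker
        by_cases hbot : S₀ = ⊥
        · have : a = 0 := by rw [ha, hbot, finrank_bot]; norm_num
          rw [this]
          have hθ1 : θ₁ ≤ 0 := by nlinarith
          nlinarith
        · have hlt : finrank ℂ ↥(S₀ ⊓ LinearMap.ker (auxE c hc0)) < finrank ℂ S₁ :=
            aux_main c hc0 S₀ S₁ hA1 hA2 (by rw [hSeq]; exact hbot)
          rw [hSeq] at hlt
          have hab : a + 1 ≤ b := by
            rw [ha, hb]; exact_mod_cast hlt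
          have hac1 : a ≤ (c : ℝ) - 1 := by
            have h1 : finrank ℂ S₀ ≤ finrank ℂ (LinearMap.ker (auxE c hc0)) :=
              Submodule.finrank_mono hker
            rw [finrank_ker_auxE] at h1
            have h2 : finrank ℂ S₀ + 1 ≤ c := by omega
            have : (↑(finrank ℂ S₀) : ℝ) + 1 ≤ (c : ℝ) := by exact_mod_cast h2
            linarith
          have key : (c : ℝ) * a ≤ ((c : ℝ) - 1) * b := by
            nlinarith [mul_nonneg (by linarith : (0:ℝ) ≤ (c:ℝ) - 1)
              (by linarith : (0:ℝ) ≤ b - a - 1)]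
          nlinarith [mul_nonneg hθ₀.le (sub_nonneg.mpr key), hθb]
      · intro _
        have key : (c : ℝ) * a ≤ (c : ℝ) + ((c : ℝ) - 1) * b := by
          by_cases hs2 : finrank ℂ S₀ ≤ 1
          · have ha1 : a ≤ 1 := by rw [ha]; exact_mod_cast hs2
            nlinarith [mul_nonneg (by linarith : (0:ℝ) ≤ (c:ℝ) - 1) hbnn,
              mul_le_mul_of_nonneg_left ha1 hcR.le]
          · have hne : S₀ ⊓ LinearMap.ker (auxE c hc0) ≠ ⊥ := by
              intro h
              have h1 := aux_inf c hc0 S₀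
              rw [h, finrank_bot] at h1
              omega
            have hlt := aux_main c hc0 S₀ S₁ hA1 hA2 hne
            have h1 := aux_inf c hc0 S₀
            have hab : finrank ℂ S₀ ≤ finrank ℂ S₁ := by omega
            have hab' : a ≤ b := by rw [ha, hb]; exact_mod_cast hab
            nlinarith [mul_nonneg (by linarith : (0:ℝ) ≤ (c:ℝ) - 1)
              (by linarith : (0:ℝ) ≤ b - a)]
        nlinarith [mul_nonneg hθ₀.le (by linarith : (0:ℝ) ≤ (c:ℝ) + ((c:ℝ) - 1) * b - (c:ℝ) * a),
          hθb, hθc]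
    · intro hss
      set v : Fin c → ℂ := Pi.single ⟨0, hc0⟩ 1 with hv
      have hvne : v ≠ 0 := by
        intro h
        have := congrFun h ⟨0, hc0⟩
        simp [hv, Pi.single_eq_same] at this
      have h1 : (ℂ ∙ v).map (auxP c) ≤ ⊥ := by
        rw [Submodule.map_span, Set.image_singleton, auxP_single c hc0,
          Submodule.span_zero_singleton]
      have h2 : (ℂ ∙ v).map (auxN c) ≤ ⊥ := by
        rw [Submodule.map_span, Set.image_singleton, auxN_single c hc0,
          Submodule.span_zero_singleton]
      have h3 : ∀ q : Fin n, (⊥ : Submodule ℂ (Fin c → ℂ)).map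
          ((fun _ => (0 : (Fin c → ℂ) →ₗ[ℂ] (Fin c → ℂ))) q) ≤ ℂ ∙ v := by
        intro q; rw [Submodule.map_bot]; exact bot_le
      have h4 : ∀ q : Fin (n-1), LinearMap.range
          ((fun _ => (0 : ℂ →ₗ[ℂ] (Fin c → ℂ))) q) ≤ ℂ ∙ v := by
        intro q; rw [LinearMap.range_zero]; exact bot_le
      have := (hss (ℂ ∙ v) ⊥ h1 h2 h3).2 h4
      rw [finrank_span_singleton hvne, finrank_bot] at this
      push_cast at this
      nlinarith
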